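/- For any κ > 0, every nonzero complex root of Q(z; κ) = e^z (1 + z²/κ²) - (1 + z) is non-real and simple, i.e., if Q(z) = 0 with z ≠ 0 then z ∉ ℝ and ∂_z Q(z) ≠ 0. -/

import Mathlib

set_option maxHeartbeats 400000 in

theorem Q_nonzero_roots_simple (κ : ℝ) (hκ : 0 < κ)
    (Q : ℂ → ℂ)
    (hQ : ∀ z : ℂ, Q z = Complex.exp z * (1 + z ^ 2 / (κ : ℂ) ^ 2) - (1 + z)) :
    ∀ z : ℂ, z ≠ 0 → Q z = 0 → z.im ≠ 0 ∧ deriv Q z ≠ 0 := by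
  intro z hz hQz
  have hκc : ((κ : ℂ)) ≠ 0 := Complex.ofReal_ne_zero.mpr hκ.ne'
  have hκ2 : ((κ : ℂ))^2 ≠ 0 := pow_ne_zero 2 hκc
  rw [hQ] at hQz
  -- Part 1 : nonreal
  have him : z.im ≠ 0 := by
    intro him
    have hzre : z = (z.re : ℂ) := Complex.ext rfl (by simp [him])
    set x := z.re with hxdef
    have hx0 : x ≠ 0 := by
      intro h
      apply hz
      rw [hzre, h]; simp
    rw [hzre, ← Complex.ofReal_exp] at hQz
    have hreal : Real.exp x * (1 + x^2/κ^2) - (1 + x) = 0 := by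
      exact_mod_cast hQz
    have hexp := Real.add_one_lt_exp hx0
    have hκ2' : (0:ℝ) < κ^2 := by positivity
    have hep : (0:ℝ) < Real.exp x := Real.exp_pos x
    have h1 : Real.exp x * (κ^2 + x^2) = (1+x) * κ^2 := by
      field_simp at hreal
      linarith
    nlinarith [mul_nonneg hep.le (sq_nonneg x), mul_lt_mul_of_pos_right hexp hκ2']
  refine ⟨him, ?_⟩
  -- derivative formula
  have hQfun : Q = fun w => Complex.exp w * (1 + w ^ 2 / (κ : ℂ) ^ 2) - (1 + w) := funext hQ
  have hder : HasDerivAt Q (Complex.exp z * (1 + z ^ 2 / (κ : ℂ) ^ 2) + Complex.exp z * (2 * z / (κ : ℂ) ^ 2) - 1) z := by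
    rw [hQfun]
    have h1 : HasDerivAt Complex.exp (Complex.exp z) z := Complex.hasDerivAt_exp z
    have h2 : HasDerivAt (fun w : ℂ => 1 + w ^ 2 / (κ : ℂ) ^ 2) (2 * z / (κ : ℂ) ^ 2) z := by
      have := ((hasDerivAt_pow 2 z).div_const ((κ : ℂ) ^ 2)).const_add 1
      simpa using this
    have h3 : HasDerivAt (fun w : ℂ => 1 + w) 1 z := by
      simpa using (hasDerivAt_id z).const_add (1 : ℂ)
    exact (h1.mul h2).sub h3
  intro hd
  rw [hder.deriv] at hd
  have he : Complex.exp z = -(κ : ℂ)^2 / 2 := by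
    have h4 : z * ((κ : ℂ)^2 + 2 * Complex.exp z) = 0 := by
      field_simp at hd hQz
      linear_combination hd - hQz
    rcases mul_eq_zero.mp h4 with h | h
    · exact absurd h hz
    · linear_combination h / 2
  have hquad : z^2 + 2*z + 2 + (κ : ℂ)^2 = 0 := by
    have h5 : (κ : ℂ)^2 * (z^2 + 2*z + 2 + (κ : ℂ)^2) = 0 := by
      rw [he] at hQz
      field_simp at hQz
      linear_combination -(κ : ℂ)^2 * hQz
    rcases mul_eq_zero.mp h5 with h | h
    · exact absurd h hκ2
    · exact h
  -- real and imaginary parts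
  have he' : Complex.exp z = ((-κ^2/2 : ℝ) : ℂ) := by rw [he]; push_cast; ring
  have hsin : Real.sin z.im = 0 := by
    have h6 : Real.exp z.re * Real.sin z.im = 0 := by
      have h := congrArg Complex.im he'
      simpa only [Complex.exp_im, Complex.ofReal_im] using h
    rcases mul_eq_zero.mp h6 with h | h
    · exact absurd h (Real.exp_ne_zero z.re)
    · exact h
  have hcos : Real.exp z.re * Real.cos z.im = -κ^2/2 := by
    have h6 := congrArg Complex.re he'
    simpa only [Complex.exp_re, Complex.ofReal_re] using h6
  have h7 := hquad
  rw [Complex.ext_iff] at h7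
  simp [pow_two, Complex.mul_re, Complex.mul_im] at h7
  obtain ⟨h7r, h7i⟩ := h7
  have ha : z.re = -1 := by
    have h8 : (z.re + 1) * z.im = 0 := by linear_combination h7i / 2
    rcases mul_eq_zero.mp h8 with h | h
    · linarith
    · exact absurd h him
  -- cos z.im = -1
  have hcos1 : Real.cos z.im = -1 := by
    have hc2 : Real.cos z.im ^ 2 = 1 := by
      have := Real.sin_sq_add_cos_sq z.im
      nlinarith
    have hcneg : Real.cos z.im < 0 := by
      have hep := Real.exp_pos z.re
      nlinarith [sq_nonneg κ, mul_pos hκ hκ]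
    nlinarith
  have hκe : κ^2 = 2 * Real.exp (-1) := by
    rw [ha, hcos1] at hcos
    rw [Real.exp_neg]
    have := Real.exp_pos (-1 : ℝ)
    nlinarith [Real.exp_neg (1:ℝ), hcos]
  -- b² = 1 + κ²
  have hb2 : z.im^2 = 1 + κ^2 := by
    rw [ha] at h7r
    nlinarith [h7r]
  -- sin b = 0, b ≠ 0 ⇒ b² ≥ π²
  obtain ⟨n, hn⟩ := Real.sin_eq_zero_iff.mp hsin
  have hn0 : n ≠ 0 := by
    intro h
    rw [h] at hn
    simp at hn
    exact him hn.symm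
  have hge : Real.pi^2 ≤ z.im^2 := by
    rw [← hn]
    have h1 : (1:ℝ) ≤ (n:ℝ)^2 := by
      have h2 : (1:ℝ) ≤ |(n:ℝ)| := by
        have := Int.one_le_abs (by simpa using hn0)
        exact_mod_cast this
      nlinarith [sq_abs ((n:ℝ)), abs_nonneg ((n:ℝ))]
    nlinarith [Real.pi_pos]
  have hexp1 : Real.exp (-1) < 1/2 := by
    rw [Real.exp_neg]
    have h9 : (2:ℝ) < Real.exp 1 := by
      have := Real.exp_one_gt_d9
      linarith
    rw [inv_lt_comm₀ (by linarith) (by norm_num)]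
    linarith
  nlinarith [Real.pi_gt_three, hb2, hκe, hge, hexp1]
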